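/- arXiv:2006.05773 — 5 statements merged into one kernel-verified Lean document; each statement's English description precedes it below -/
import Mathlib

section
/- Let F ∈ C⁰(T⁵) and let φ ∈ C²(T⁵) be a solution of equation (★). Then at every point A > 0 and B > 0, and 0 < 2e^{F/2} ≤ Δφ + 2, where Δφ = φ_{11}+φ_{22}+φ_{33}+φ_{44}+φ_{55}. -/
open MeasureTheory

/-- Partial derivative in the `i`-th coordinate direction. -/
noncomputable def pd {n : ℕ} (i : Fin n) (f : (Fin n → ℝ) → ℝ) : (Fin n → ℝ) → ℝ :=
  fun x => fderiv ℝ f x (Pi.single i 1)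

/-- Second partial derivative `∂²f/∂x^i∂x^j`. -/
noncomputable def pd2 {n : ℕ} (i j : Fin n) (f : (Fin n → ℝ) → ℝ) : (Fin n → ℝ) → ℝ :=
  pd i (pd j f)

/-- A function on `ℝⁿ` that is `1`-periodic in every coordinate, i.e. a function on `Tⁿ`. -/
def PeriodicPi {n : ℕ} (f : (Fin n → ℝ) → ℝ) : Prop :=
  ∀ x : Fin n → ℝ, ∀ i : Fin n, f (x + Pi.single i 1) = f x

/-- The Euclidean Laplacian. -/
noncomputable def lap {n : ℕ} (f : (Fin n → ℝ) → ℝ) : (Fin n → ℝ) → ℝ :=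
  fun x => ∑ i, pd2 i i f x

/-- Equation (★): the reduction of the quaternionic Monge–Ampère equation to `T⁵`. -/
def EqStar (F φ : (Fin 5 → ℝ) → ℝ) : Prop :=
  ∀ x : Fin 5 → ℝ,
    (pd2 0 0 φ x + pd2 1 1 φ x + pd2 2 2 φ x + pd2 3 3 φ x + 1) * (pd2 4 4 φ x + 1)
      - (pd2 0 4 φ x) ^ 2 - (pd2 1 4 φ x) ^ 2 - (pd2 2 4 φ x) ^ 2 - (pd2 3 4 φ x) ^ 2
      = Real.exp (F x)

section Aux

variable {φ : (Fin 5 → ℝ) → ℝ}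

/-- pd i φ is C¹ when φ is C². -/
lemma pd_contDiff (hφ : ContDiff ℝ 2 φ) (i : Fin 5) : ContDiff ℝ 1 (pd i φ) := by
  have h1 : ContDiff ℝ 1 (fderiv ℝ φ) :=
    hφ.fderiv_right (by norm_num)
  exact (ContinuousLinearMap.apply ℝ ℝ (Pi.single i (1:ℝ))).contDiff.comp h1

/-- periodicity is inherited by pd. -/
lemma pd_periodic (hφ : ContDiff ℝ 2 φ) (hper : PeriodicPi φ) (i : Fin 5) :
    PeriodicPi (pd i φ) := by
  intro x j
  unfold pd
  have key : fderiv ℝ φ (x + Pi.single j 1) = fderiv ℝ φ x := by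
    have hd : DifferentiableAt ℝ φ (x + Pi.single j 1) :=
      (hφ.differentiable (by norm_num)).differentiableAt
    have h1 : HasFDerivAt (fun z : Fin 5 → ℝ => φ (z + Pi.single j 1))
        (fderiv ℝ φ (x + Pi.single j 1)) x := by
      have ht : HasFDerivAt (fun z : Fin 5 → ℝ => z + Pi.single j 1)
          (ContinuousLinearMap.id ℝ (Fin 5 → ℝ)) x := (hasFDerivAt_id x).add_const _
      simpa [Function.comp_def] using hd.hasFDerivAt.comp x ht
    have h2 : (fun z : Fin 5 → ℝ => φ (z + Pi.single j 1)) = φ := by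
      funext z; exact hper z j
    rw [h2] at h1
    exact h1.fderiv.symm
  rw [key]

lemma hasDerivAt_line (f : (Fin 5 → ℝ) → ℝ) (hf : Differentiable ℝ f)
    (x v : Fin 5 → ℝ) (t : ℝ) :
    HasDerivAt (fun s => f (x + s • v)) (fderiv ℝ f (x + t • v) v) t := by
  have hL : HasDerivAt (fun s : ℝ => x + s • v) v t := by
    simpa using ((hasDerivAt_id t).smul_const v).const_add x
  exact (hf (x + t • v)).hasFDerivAt.comp_hasDerivAt t hL

/-- Somewhere pd2 i i φ ≥ 0. -/
lemma exists_pd2_nonneg (hφ : ContDiff ℝ 2 φ) (hper : PeriodicPi φ) (i : Fin 5) :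
    ∃ x₀ : Fin 5 → ℝ, 0 ≤ pd2 i i φ x₀ := by
  by_contra h
  push_neg at h
  set e : Fin 5 → ℝ := Pi.single i 1 with he
  have hc1 : ContDiff ℝ 1 (pd i φ) := pd_contDiff hφ i
  have hdiff : Differentiable ℝ (pd i φ) := hc1.differentiable (by norm_num)
  have hcont2 : Continuous (pd2 i i φ) := by
    have := hc1.continuous_fderiv (by norm_num)
    exact ((ContinuousLinearMap.apply ℝ ℝ e).continuous.comp this)
  set G : ℝ → ℝ := fun t => pd i φ ((0 : Fin 5 → ℝ) + t • e) with hG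
  have hder : ∀ t ∈ Set.uIcc (0:ℝ) 1,
      HasDerivAt G (pd2 i i φ ((0 : Fin 5 → ℝ) + t • e)) t := by
    intro t _
    exact hasDerivAt_line (pd i φ) hdiff 0 e t
  have hcont : Continuous fun t : ℝ => pd2 i i φ ((0 : Fin 5 → ℝ) + t • e) :=
    hcont2.comp (by continuity)
  have hint : (∫ t in (0:ℝ)..1, pd2 i i φ ((0 : Fin 5 → ℝ) + t • e)) = G 1 - G 0 :=
    intervalIntegral.integral_eq_sub_of_hasDerivAt hder (hcont.intervalIntegrable 0 1)
  have hG10 : G 1 = G 0 := by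
    have : (0 : Fin 5 → ℝ) + (1:ℝ) • e = ((0 : Fin 5 → ℝ) + (0:ℝ) • e) + Pi.single i 1 := by
      simp [he]
    rw [hG]
    simp only [this]
    exact pd_periodic hφ hper i _ i
  have hpos : 0 < ∫ t in (0:ℝ)..1, -(pd2 i i φ ((0 : Fin 5 → ℝ) + t • e)) := by
    apply intervalIntegral.intervalIntegral_pos_of_pos_on
    · exact hcont.neg.intervalIntegrable 0 1
    · intro t _; linarith [h ((0 : Fin 5 → ℝ) + t • e)]
    · norm_num
  rw [intervalIntegral.integral_neg, hint, hG10] at hpos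
  simp at hpos

lemma amgm {a b s : ℝ} (ha : 0 < a) (hb : 0 < b) (hs : 0 < s) (h : s ^ 2 ≤ a * b) :
    2 * s ≤ a + b := by
  nlinarith [sq_nonneg (a - b), sq_nonneg (a + b - 2 * s)]

end Aux

/-- For a solution of (★): `A > 0`, `B > 0` and `0 < 2e^{F/2} ≤ Δφ + 2` at every point. -/
theorem A_pos_B_pos_lap_lower_bound
    (F φ : (Fin 5 → ℝ) → ℝ) (hF : Continuous F) (hFper : PeriodicPi F)
    (hφ : ContDiff ℝ 2 φ) (hφper : PeriodicPi φ) (heq : EqStar F φ) :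
    ∀ x : Fin 5 → ℝ,
      0 < pd2 0 0 φ x + pd2 1 1 φ x + pd2 2 2 φ x + pd2 3 3 φ x + 1 ∧
      0 < pd2 4 4 φ x + 1 ∧
      0 < 2 * Real.exp (F x / 2) ∧
      2 * Real.exp (F x / 2) ≤ lap φ x + 2 := by
  set A : (Fin 5 → ℝ) → ℝ :=
    fun x => pd2 0 0 φ x + pd2 1 1 φ x + pd2 2 2 φ x + pd2 3 3 φ x + 1 with hA
  set B : (Fin 5 → ℝ) → ℝ := fun x => pd2 4 4 φ x + 1 with hB
  have hprod : ∀ x, Real.exp (F x) ≤ A x * B x := by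
    intro x
    have := heq x
    simp only [hA, hB]
    nlinarith [sq_nonneg (pd2 0 4 φ x), sq_nonneg (pd2 1 4 φ x),
      sq_nonneg (pd2 2 4 φ x), sq_nonneg (pd2 3 4 φ x)]
  have hABpos : ∀ x, 0 < A x * B x := fun x => lt_of_lt_of_le (Real.exp_pos _) (hprod x)
  -- B is continuous
  have hBcont : Continuous B := by
    have hc1 : ContDiff ℝ 1 (pd 4 φ) := pd_contDiff hφ 4
    have := hc1.continuous_fderiv (by norm_num)
    exact ((ContinuousLinearMap.apply ℝ ℝ (Pi.single (4 : Fin 5) (1:ℝ))).continuous.comp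
      this).add continuous_const
  -- B is positive somewhere
  obtain ⟨x₀, hx₀⟩ := exists_pd2_nonneg hφ hφper (4 : Fin 5)
  have hBx₀ : 0 < B x₀ := by simp only [hB]; linarith
  -- B positive everywhere
  have hBpos : ∀ x, 0 < B x := by
    intro y
    by_contra hy
    push_neg at hy
    have hyneg : B y < 0 := by
      rcases lt_or_eq_of_le hy with h | h
      · exact h
      · exfalso; have := hABpos y; rw [h, mul_zero] at this; exact lt_irrefl 0 this
    have hpath : Continuous fun t : ℝ => B (y + t • (x₀ - y)) :=
      hBcont.comp (by continuity)
    have harg0 : y + (0:ℝ) • (x₀ - y) = y := by rw [zero_smul]; abel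
    have h0 : B (y + (0:ℝ) • (x₀ - y)) < 0 := by rw [harg0]; exact hyneg
    have harg : y + (1:ℝ) • (x₀ - y) = x₀ := by rw [one_smul]; abel
    have h1 : (0:ℝ) < B (y + (1:ℝ) • (x₀ - y)) := by rw [harg]; exact hBx₀
    obtain ⟨t, _, ht⟩ := intermediate_value_Icc (by norm_num : (0:ℝ) ≤ 1)
      hpath.continuousOn (Set.mem_Icc.mpr ⟨le_of_lt h0, le_of_lt h1⟩)
    have ht' : B (y + t • (x₀ - y)) = 0 := ht
    have := hABpos (y + t • (x₀ - y))
    rw [ht'] at this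
    simp at this
  have hApos : ∀ x, 0 < A x := by
    intro x
    have := hABpos x
    rcases mul_pos_iff.mp this with ⟨h, _⟩ | ⟨_, h⟩
    · exact h
    · linarith [hBpos x]
  intro x
  have hlap : lap φ x + 2 = A x + B x := by
    simp only [lap, hA, hB, Fin.sum_univ_five]; ring
  have hexp : Real.exp (F x) = Real.exp (F x / 2) ^ 2 := by
    rw [sq, ← Real.exp_add]; congr 1; ring
  refine ⟨hApos x, hBpos x, by positivity, ?_⟩
  rw [hlap]
  have h1 : Real.exp (F x / 2) ^ 2 ≤ A x * B x := by rw [← hexp]; exact hprod x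
  have hs : 0 < Real.exp (F x / 2) := Real.exp_pos _
  have hsum : 0 < A x + B x := by linarith [hApos x, hBpos x]
  exact amgm (hApos x) (hBpos x) hs h1
end

section
/- Let F ∈ C⁰(T⁵) and let φ ∈ C²(T⁵) be a solution of equation (★). Then at every point of ℝ⁵ and for every ξ = (ξ₁,ξ₂,ξ₃,ξ₄,ξ₅) ∈ ℝ⁵ one has A ξ₅² + B(ξ₁²+ξ₂²+ξ₃²+ξ₄²) − 2(φ_{15}ξ₁ξ₅ + φ_{25}ξ₂ξ₅ + φ_{35}ξ₃ξ₅ + φ_{45}ξ₄ξ₅) ≥ λ(φ) (ξ₁²+ξ₂²+ξ₃²+ξ₄²+ξ₅²), where λ(φ) = ½(A + B − √((A+B)² − 4e^F)); moreover λ(φ) > 0, so equation (★) is elliptic at any solution. -/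
open MeasureTheory

set_option maxHeartbeats 1000000

lemma fderiv_periodicPi {n : ℕ} {f : (Fin n → ℝ) → ℝ} (hf : Differentiable ℝ f)
    (hper : PeriodicPi f) (x : Fin n → ℝ) (i : Fin n) :
    fderiv ℝ f (x + Pi.single i 1) = fderiv ℝ f x := by
  set c : Fin n → ℝ := Pi.single i (1:ℝ)
  have h1 : HasFDerivAt f (fderiv ℝ f (x + c)) (x + c) := (hf (x + c)).hasFDerivAt
  have h2 : HasFDerivAt (fun y : Fin n → ℝ => y + c) (ContinuousLinearMap.id ℝ _) x :=
    (hasFDerivAt_id x).add_const c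
  have h3 : HasFDerivAt (fun y => f (y + c))
      ((fderiv ℝ f (x + c)).comp (ContinuousLinearMap.id ℝ _)) x := h1.comp x h2
  have h4 : (fun y => f (y + c)) = f := funext fun y => hper y i
  rw [h4, ContinuousLinearMap.comp_id] at h3
  exact h3.fderiv.symm

lemma key_alg (a b p1 p2 p3 p4 E : ℝ) (hE : 0 < E)
    (heq : a * b - p1^2 - p2^2 - p3^2 - p4^2 = E) (hb : 0 < b) :
    0 < (1/2) * (a + b - Real.sqrt ((a+b)^2 - 4*E)) ∧
    ∀ ξ0 ξ1 ξ2 ξ3 ξ4 : ℝ,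
      a * ξ4^2 + b * (ξ0^2+ξ1^2+ξ2^2+ξ3^2)
        - 2*(p1*ξ0*ξ4 + p2*ξ1*ξ4 + p3*ξ2*ξ4 + p4*ξ3*ξ4)
      ≥ (1/2) * (a + b - Real.sqrt ((a+b)^2 - 4*E)) * (ξ0^2+ξ1^2+ξ2^2+ξ3^2+ξ4^2) := by
  have ha : 0 < a := by nlinarith [sq_nonneg p1, sq_nonneg p2, sq_nonneg p3, sq_nonneg p4]
  have hD : 0 ≤ (a+b)^2 - 4*E := by
    nlinarith [sq_nonneg (a-b), sq_nonneg p1, sq_nonneg p2, sq_nonneg p3, sq_nonneg p4]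
  set s := Real.sqrt ((a+b)^2 - 4*E) with hsdef
  have hs0 : 0 ≤ s := Real.sqrt_nonneg _
  have hs2 : s^2 = (a+b)^2 - 4*E := Real.sq_sqrt hD
  have hlt : s < a + b := by nlinarith
  refine ⟨by linarith, ?_⟩
  intro ξ0 ξ1 ξ2 ξ3 ξ4
  have hbl : 0 ≤ b - (1/2)*(a+b-s) := by
    nlinarith [sq_nonneg p1, sq_nonneg p2, sq_nonneg p3, sq_nonneg p4]
  have hal : 0 ≤ a - (1/2)*(a+b-s) := by
    nlinarith [sq_nonneg p1, sq_nonneg p2, sq_nonneg p3, sq_nonneg p4]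
  have hprod : (a - (1/2)*(a+b-s)) * (b - (1/2)*(a+b-s)) = p1^2+p2^2+p3^2+p4^2 := by
    nlinarith [hs2]
  set l := (1/2)*(a+b-s) with hldef
  rcases lt_or_eq_of_le hbl with hbl' | hbl'
  · have hid : (b-l) * ((a * ξ4^2 + b * (ξ0^2+ξ1^2+ξ2^2+ξ3^2)
        - 2*(p1*ξ0*ξ4 + p2*ξ1*ξ4 + p3*ξ2*ξ4 + p4*ξ3*ξ4))
        - l * (ξ0^2+ξ1^2+ξ2^2+ξ3^2+ξ4^2))
        = ((b-l)*ξ0 - p1*ξ4)^2 + ((b-l)*ξ1 - p2*ξ4)^2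
          + ((b-l)*ξ2 - p3*ξ4)^2 + ((b-l)*ξ3 - p4*ξ4)^2 := by
      linear_combination (ξ4^2) * hprod
    by_contra hc
    push_neg at hc
    have hneg : (b-l) * ((a * ξ4^2 + b * (ξ0^2+ξ1^2+ξ2^2+ξ3^2)
        - 2*(p1*ξ0*ξ4 + p2*ξ1*ξ4 + p3*ξ2*ξ4 + p4*ξ3*ξ4))
        - l * (ξ0^2+ξ1^2+ξ2^2+ξ3^2+ξ4^2)) < 0 :=
      mul_neg_of_pos_of_neg hbl' (by linarith)
    rw [hid] at hneg
    linarith [sq_nonneg ((b-l)*ξ0 - p1*ξ4), sq_nonneg ((b-l)*ξ1 - p2*ξ4),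
      sq_nonneg ((b-l)*ξ2 - p3*ξ4), sq_nonneg ((b-l)*ξ3 - p4*ξ4)]
  · have hsum : p1^2+p2^2+p3^2+p4^2 = 0 := by
      rw [← hprod, ← hbl']; ring
    have hp1 : p1 = 0 := by nlinarith [sq_nonneg p1, sq_nonneg p2, sq_nonneg p3, sq_nonneg p4]
    have hp2 : p2 = 0 := by nlinarith [sq_nonneg p1, sq_nonneg p2, sq_nonneg p3, sq_nonneg p4]
    have hp3 : p3 = 0 := by nlinarith [sq_nonneg p1, sq_nonneg p2, sq_nonneg p3, sq_nonneg p4]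
    have hp4 : p4 = 0 := by nlinarith [sq_nonneg p1, sq_nonneg p2, sq_nonneg p3, sq_nonneg p4]
    subst hp1 hp2 hp3 hp4
    nlinarith [mul_nonneg hal (sq_nonneg ξ4)]

/-- Ellipticity of equation (★) at any solution. -/
theorem ellipticity_of_eqStar
    (F φ : (Fin 5 → ℝ) → ℝ) (hF : Continuous F) (hFper : PeriodicPi F)
    (hφ : ContDiff ℝ 2 φ) (hφper : PeriodicPi φ) (heq : EqStar F φ) :
    ∀ x : Fin 5 → ℝ,
      (0 < (1/2) * ((pd2 0 0 φ x + pd2 1 1 φ x + pd2 2 2 φ x + pd2 3 3 φ x + 1)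
              + (pd2 4 4 φ x + 1)
              - Real.sqrt (((pd2 0 0 φ x + pd2 1 1 φ x + pd2 2 2 φ x + pd2 3 3 φ x + 1)
                  + (pd2 4 4 φ x + 1)) ^ 2 - 4 * Real.exp (F x)))) ∧
      ∀ ξ : Fin 5 → ℝ,
        (pd2 0 0 φ x + pd2 1 1 φ x + pd2 2 2 φ x + pd2 3 3 φ x + 1) * (ξ 4) ^ 2
          + (pd2 4 4 φ x + 1) * ((ξ 0) ^ 2 + (ξ 1) ^ 2 + (ξ 2) ^ 2 + (ξ 3) ^ 2)
          - 2 * (pd2 0 4 φ x * ξ 0 * ξ 4 + pd2 1 4 φ x * ξ 1 * ξ 4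
              + pd2 2 4 φ x * ξ 2 * ξ 4 + pd2 3 4 φ x * ξ 3 * ξ 4)
        ≥ (1/2) * ((pd2 0 0 φ x + pd2 1 1 φ x + pd2 2 2 φ x + pd2 3 3 φ x + 1)
              + (pd2 4 4 φ x + 1)
              - Real.sqrt (((pd2 0 0 φ x + pd2 1 1 φ x + pd2 2 2 φ x + pd2 3 3 φ x + 1)
                  + (pd2 4 4 φ x + 1)) ^ 2 - 4 * Real.exp (F x)))
            * ((ξ 0) ^ 2 + (ξ 1) ^ 2 + (ξ 2) ^ 2 + (ξ 3) ^ 2 + (ξ 4) ^ 2) := by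
  -- regularity facts
  have hφd : Differentiable ℝ φ := hφ.differentiable (by norm_num)
  have hfd1 : ContDiff ℝ 1 (fun y => fderiv ℝ φ y) := hφ.fderiv_right (by norm_num)
  have hpd4 : ContDiff ℝ 1 (pd 4 φ) := hfd1.clm_apply contDiff_const
  have hpd4d : Differentiable ℝ (pd 4 φ) := hpd4.differentiable (by norm_num)
  have hpd4c : Continuous (pd 4 φ) := hpd4.continuous
  have hcont2 : Continuous (pd2 4 4 φ) :=
    ((hpd4.fderiv_right (m := 0) (by norm_num)).continuous).clm_apply continuous_const
  -- periodicity of pd 4 φ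
  have hpd4per : PeriodicPi (pd 4 φ) := by
    intro y i
    unfold pd
    rw [fderiv_periodicPi hφd hφper]
  -- A * B > 0 everywhere, hence B ≠ 0 everywhere
  have hABpos : ∀ y : Fin 5 → ℝ,
      0 < (pd2 0 0 φ y + pd2 1 1 φ y + pd2 2 2 φ y + pd2 3 3 φ y + 1) * (pd2 4 4 φ y + 1) := by
    intro y
    have h := heq y
    nlinarith [Real.exp_pos (F y), sq_nonneg (pd2 0 4 φ y), sq_nonneg (pd2 1 4 φ y),
      sq_nonneg (pd2 2 4 φ y), sq_nonneg (pd2 3 4 φ y)]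
  have hBne : ∀ y : Fin 5 → ℝ, pd2 4 4 φ y + 1 ≠ 0 := by
    intro y hy
    have := hABpos y
    rw [hy, mul_zero] at this
    exact lt_irrefl 0 this
  -- B > 0 everywhere
  have hBpos : ∀ y : Fin 5 → ℝ, 0 < pd2 4 4 φ y + 1 := by
    intro y
    rcases lt_or_gt_of_ne (hBne y) with hneg | hpos
    · exfalso
      set e : Fin 5 → ℝ := Pi.single (4 : Fin 5) (1:ℝ) with he
      set ℓ : ℝ → (Fin 5 → ℝ) := fun t => y + t • e with hℓ
      have hℓc : Continuous ℓ := by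
        apply continuous_const.add
        exact (continuous_id.smul continuous_const)
      have hℓd : ∀ t : ℝ, HasDerivAt ℓ e t := by
        intro t
        simpa [hℓ] using ((hasDerivAt_id t).smul_const e).const_add y
      have hh : ∀ t : ℝ, HasDerivAt (fun u => pd 4 φ (ℓ u)) (pd2 4 4 φ (ℓ t)) t := by
        intro t
        exact (hpd4d (ℓ t)).hasFDerivAt.comp_hasDerivAt t (hℓd t)
      have hk : Continuous (fun t => pd2 4 4 φ (ℓ t) + 1) :=
        (hcont2.comp hℓc).add continuous_const
      have hk0 : pd2 4 4 φ (ℓ 0) + 1 < 0 := by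
        have : ℓ 0 = y := by simp [hℓ]
        rw [this]; exact hneg
      have hksign : ∀ t : ℝ, pd2 4 4 φ (ℓ t) + 1 < 0 := by
        intro t
        by_contra hcon
        push_neg at hcon
        rcases le_total 0 t with h0t | ht0
        · obtain ⟨u, -, hu⟩ := intermediate_value_Icc h0t (hk.continuousOn)
            (Set.mem_Icc.mpr ⟨le_of_lt hk0, hcon⟩)
          exact hBne (ℓ u) hu
        · obtain ⟨u, -, hu⟩ := intermediate_value_Icc' ht0 (hk.continuousOn)
            (Set.mem_Icc.mpr ⟨le_of_lt hk0, hcon⟩)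
          exact hBne (ℓ u) hu
      have hanti : StrictAntiOn (fun u => pd 4 φ (ℓ u)) (Set.Icc (0:ℝ) 1) := by
        apply strictAntiOn_of_deriv_neg (convex_Icc 0 1)
          ((hpd4c.comp hℓc).continuousOn)
        intro t _
        have hd := (hh t).deriv
        simp only [Function.comp_def]
        rw [hd]
        linarith [hksign t]
      have hper1 : pd 4 φ (ℓ 1) = pd 4 φ (ℓ 0) := by
        have h1 : ℓ 1 = y + e := by simp [hℓ]
        have h0 : ℓ 0 = y := by simp [hℓ]
        rw [h1, h0, he]
        exact hpd4per y 4
      have := hanti (Set.left_mem_Icc.mpr zero_le_one) (Set.right_mem_Icc.mpr zero_le_one)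
        zero_lt_one
      simp only [hper1] at this
      exact lt_irrefl _ this
    · exact hpos
  intro x
  have h := heq x
  have hkey := key_alg
    (pd2 0 0 φ x + pd2 1 1 φ x + pd2 2 2 φ x + pd2 3 3 φ x + 1)
    (pd2 4 4 φ x + 1)
    (pd2 0 4 φ x) (pd2 1 4 φ x) (pd2 2 4 φ x) (pd2 3 4 φ x)
    (Real.exp (F x)) (Real.exp_pos (F x)) h (hBpos x)
  exact ⟨hkey.1, fun ξ => hkey.2 (ξ 0) (ξ 1) (ξ 2) (ξ 3) (ξ 4)⟩
end

section
/- Let n ≥ 1, let φ ∈ C⁴(Tⁿ) (a ℤⁿ-periodic C⁴ function on ℝⁿ), fix μ ∈ ℝ, and let p₀ be a point where Φ = (Δφ + 2)e^{−μφ} attains its maximum. For i, j = 1,…,n define η_{ij} = μ(Δφ+2)(φ_{ij} + μ φ_i φ_j) − Δφ_{ij}, where φ_i = ∂φ/∂x^i, φ_{ij} = ∂²φ/∂x^i∂x^j and Δ is the Euclidean Laplacian. Then η_{ii}(p₀) ≥ 0 for every i, and √(η_{ii}(p₀) η_{jj}(p₀)) ≥ |η_{ij}(p₀)| for every i, j.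 -/
open MeasureTheory

/-- The quantity `η_{ij} = μ(Δφ+2)(φ_{ij} + μ φ_i φ_j) − Δφ_{ij}`. -/
noncomputable def eta {n : ℕ} (φ : (Fin n → ℝ) → ℝ) (μ : ℝ) (i j : Fin n) :
    (Fin n → ℝ) → ℝ :=
  fun x => μ * (lap φ x + 2) * (pd2 i j φ x + μ * pd i φ x * pd j φ x) - lap (pd2 i j φ) x

section Aux

open Filter

variable {n : ℕ}

lemma pd_contDiff_s9 {m k : WithTop ℕ∞} {f : (Fin n → ℝ) → ℝ} (hf : ContDiff ℝ k f)
    (h : m + 1 ≤ k) (i : Fin n) : ContDiff ℝ m (pd i f) :=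
  (hf.fderiv_right h).clm_apply contDiff_const

lemma pd2_contDiff {m k : WithTop ℕ∞} {f : (Fin n → ℝ) → ℝ} (hf : ContDiff ℝ k f)
    (h : m + 2 ≤ k) (i j : Fin n) : ContDiff ℝ m (pd2 i j f) := by
  refine pd_contDiff_s9 (pd_contDiff_s9 hf ?_ j) le_rfl i
  calc (m + 1) + 1 = m + 2 := by rw [add_assoc]; norm_num
  _ ≤ k := h

lemma pd2_eq_fderiv2 {f : (Fin n → ℝ) → ℝ} (hf : ContDiff ℝ 2 f) (i j : Fin n) (x : Fin n → ℝ) :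
    pd2 i j f x = fderiv ℝ (fderiv ℝ f) x (Pi.single i 1) (Pi.single j 1) := by
  have hdf : DifferentiableAt ℝ (fderiv ℝ f) x :=
    ((hf.fderiv_right (m := 1) le_rfl).differentiable one_ne_zero).differentiableAt
  have h : pd j f = fun y => fderiv ℝ f y (Pi.single j 1) := rfl
  rw [pd2, pd, h, fderiv_clm_apply hdf (differentiableAt_const _)]
  simp

lemma pd2_symm {f : (Fin n → ℝ) → ℝ} (hf : ContDiff ℝ 2 f) (i j : Fin n) (x : Fin n → ℝ) :
    pd2 i j f x = pd2 j i f x := by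
  rw [pd2_eq_fderiv2 hf, pd2_eq_fderiv2 hf]
  exact second_derivative_symmetric
    (fun y => ((hf.differentiable two_ne_zero).differentiableAt).hasFDerivAt)
    (((hf.fderiv_right (m := 1) le_rfl).differentiable one_ne_zero) x).hasFDerivAt _ _

lemma pd_comm {f : (Fin n → ℝ) → ℝ} (hf : ContDiff ℝ 2 f) (i j : Fin n) :
    pd i (pd j f) = pd j (pd i f) := funext fun x => pd2_symm hf i j x

variable {f g : (Fin n → ℝ) → ℝ} {x : Fin n → ℝ} {i : Fin n} {c : ℝ}

lemma pd_add (hf : DifferentiableAt ℝ f x) (hg : DifferentiableAt ℝ g x) :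
    pd i (fun y => f y + g y) x = pd i f x + pd i g x := by
  simp [pd, fderiv_fun_add hf hg]

lemma pd_sub (hf : DifferentiableAt ℝ f x) (hg : DifferentiableAt ℝ g x) :
    pd i (fun y => f y - g y) x = pd i f x - pd i g x := by
  simp [pd, fderiv_fun_sub hf hg]

lemma pd_add_const : pd i (fun y => f y + c) x = pd i f x := by
  simp [pd, fderiv_add_const]

lemma pd_mul (hf : DifferentiableAt ℝ f x) (hg : DifferentiableAt ℝ g x) :
    pd i (fun y => f y * g y) x = pd i f x * g x + f x * pd i g x := by
  simp [pd, fderiv_fun_mul hf hg]; ring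

lemma pd_const_mul (hf : DifferentiableAt ℝ f x) :
    pd i (fun y => c * f y) x = c * pd i f x := by
  simp [pd, fderiv_const_mul hf]

lemma pd_exp (hf : DifferentiableAt ℝ f x) :
    pd i (fun y => Real.exp (f y)) x = Real.exp (f x) * pd i f x := by
  simp [pd, fderiv_exp hf]

lemma pd_sum {ι : Type*} {s : Finset ι} {F : ι → (Fin n → ℝ) → ℝ}
    (h : ∀ k ∈ s, DifferentiableAt ℝ (F k) x) :
    pd i (fun y => ∑ k ∈ s, F k y) x = ∑ k ∈ s, pd i (F k) x := by
  simp [pd, fderiv_fun_sum h]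

lemma second_deriv_nonpos_at_max {g : ℝ → ℝ} (hg : ContDiff ℝ 2 g)
    (hmax : ∀ t, g t ≤ g 0) : deriv (deriv g) 0 ≤ 0 := by
  by_contra hpos
  push_neg at hpos
  have hloc : IsLocalMax g 0 := Filter.Eventually.of_forall hmax
  have h10 : deriv g 0 = 0 := hloc.deriv_eq_zero
  have hdg : deriv g = fun t => fderiv ℝ g t 1 := funext fun t => (fderiv_apply_one_eq_deriv).symm
  have hdgd : Differentiable ℝ (deriv g) := by
    rw [hdg]
    exact ((hg.fderiv_right (m := 1) le_rfl).differentiable one_ne_zero).clm_apply (differentiable_const _)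
  have hda : HasDerivAt (deriv g) (deriv (deriv g) 0) 0 := (hdgd 0).hasDerivAt
  rw [hasDerivAt_iff_tendsto_slope] at hda
  have hev : ∀ᶠ t in nhdsWithin (0:ℝ) {(0:ℝ)}ᶜ, 0 < slope (deriv g) 0 t :=
    hda.eventually (eventually_gt_nhds hpos)
  rw [eventually_nhdsWithin_iff, Metric.eventually_nhds_iff] at hev
  obtain ⟨δ, hδ, hslope⟩ := hev
  have hder : ∀ t ∈ Set.Ioo (0:ℝ) (δ/2), 0 < deriv g t := by
    intro t ht
    have h1 : t ≠ 0 := ne_of_gt ht.1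
    have h2 : dist t 0 < δ := by
      rw [Real.dist_eq, sub_zero, abs_of_pos ht.1]
      linarith [ht.2]
    have := hslope h2 (by simpa using h1)
    rw [slope_def_field, h10, sub_zero, sub_zero, div_pos_iff] at this
    rcases this with ⟨a, _⟩ | ⟨_, b⟩
    · exact a
    · linarith [ht.1]
  have hmono : StrictMonoOn g (Set.Icc 0 (δ/2)) := by
    apply strictMonoOn_of_deriv_pos (convex_Icc _ _) (hg.continuous.continuousOn)
    intro t ht
    rw [interior_Icc] at ht
    exact hder t ht
  have : g 0 < g (δ/2) :=
    hmono (Set.left_mem_Icc.2 (by linarith)) (Set.right_mem_Icc.2 (by linarith)) (by linarith)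
  exact absurd (hmax (δ/2)) (not_le.2 this)

lemma line_stuff {f : (Fin n → ℝ) → ℝ} (hf : ContDiff ℝ 2 f) (x₀ v : Fin n → ℝ) :
    ContDiff ℝ 2 (fun t : ℝ => f (x₀ + t • v)) ∧
    deriv (deriv (fun t : ℝ => f (x₀ + t • v))) 0 = fderiv ℝ (fderiv ℝ f) x₀ v v := by
  set c : ℝ → (Fin n → ℝ) := fun t => x₀ + t • v with hc
  have hcd : ∀ t : ℝ, HasDerivAt c v t := by
    intro t
    rw [hc]
    simpa using ((hasDerivAt_id t).smul_const v).const_add x₀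
  have hcC : ContDiff ℝ 2 c := contDiff_const.add (contDiff_id.smul contDiff_const)
  have hgC : ContDiff ℝ 2 (fun t : ℝ => f (x₀ + t • v)) := hf.comp hcC
  refine ⟨hgC, ?_⟩
  have hderiv1 : deriv (fun t : ℝ => f (x₀ + t • v)) = fun t => fderiv ℝ f (c t) v := by
    funext t
    exact (((hf.differentiable two_ne_zero) (c t)).hasFDerivAt.comp_hasDerivAt t (hcd t)).deriv
  rw [hderiv1]
  have hF : HasFDerivAt (fderiv ℝ f) (fderiv ℝ (fderiv ℝ f) x₀) (c 0) := by
    have h : c 0 = x₀ := by simp [hc]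
    rw [h]
    exact (((hf.fderiv_right (m := 1) le_rfl).differentiable one_ne_zero) x₀).hasFDerivAt
  have h2 : HasDerivAt (fun t => fderiv ℝ f (c t) v) (fderiv ℝ (fderiv ℝ f) x₀ v v) 0 := by
    have hcomp : HasDerivAt (fun t => fderiv ℝ f (c t)) (fderiv ℝ (fderiv ℝ f) x₀ v) 0 :=
      hF.comp_hasDerivAt 0 (hcd 0)
    simpa using hcomp.clm_apply (hasDerivAt_const 0 v)
  exact h2.deriv

end Aux

/-- At a maximum point of `Φ = (Δφ+2)e^{−μφ}` one has `η_{ii} ≥ 0` and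
`√(η_{ii}η_{jj}) ≥ |η_{ij}|`. -/
theorem eta_at_max_point
    (n : ℕ) (hn : 1 ≤ n) (φ : (Fin n → ℝ) → ℝ)
    (hφ : ContDiff ℝ 4 φ) (hφper : PeriodicPi φ) (μ : ℝ) (p₀ : Fin n → ℝ)
    (hmax : ∀ x : Fin n → ℝ,
      (lap φ x + 2) * Real.exp (-μ * φ x) ≤ (lap φ p₀ + 2) * Real.exp (-μ * φ p₀)) :
    ∀ i j : Fin n,
      0 ≤ eta φ μ i i p₀ ∧
      |eta φ μ i j p₀| ≤ Real.sqrt (eta φ μ i i p₀ * eta φ μ j j p₀) := by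
  -- regularity
  have hφ2 : ContDiff ℝ 2 φ := hφ.of_le (by norm_num)
  have hφ3pd : ∀ k : Fin n, ContDiff ℝ 3 (pd k φ) :=
    fun k => pd_contDiff_s9 hφ (by norm_num) k
  have hφ2pd : ∀ k : Fin n, ContDiff ℝ 2 (pd k φ) := fun k => (hφ3pd k).of_le (by norm_num)
  have hpd2φ : ∀ a b : Fin n, ContDiff ℝ 2 (pd2 a b φ) :=
    fun a b => pd2_contDiff hφ (by norm_num) a b
  have hlap : ContDiff ℝ 2 (lap φ) := by
    have h : lap φ = fun x => ∑ k, pd2 k k φ x := rfl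
    rw [h]; exact ContDiff.sum fun k _ => hpd2φ k k
  have hlapd : Differentiable ℝ (lap φ) := hlap.differentiable two_ne_zero
  have hφd : Differentiable ℝ φ := hφ2.differentiable two_ne_zero
  have hExC : ContDiff ℝ 2 (fun x => Real.exp (-μ * φ x)) := (contDiff_const.mul hφ2).exp
  have hExd : Differentiable ℝ (fun x => Real.exp (-μ * φ x)) := hExC.differentiable two_ne_zero
  have hΦ : ContDiff ℝ 2 (fun x => (lap φ x + 2) * Real.exp (-μ * φ x)) :=
    (hlap.add contDiff_const).mul hExC
  have hpdlapd : ∀ b : Fin n, Differentiable ℝ (pd b (lap φ)) :=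
    fun b => (pd_contDiff_s9 (m := 1) hlap le_rfl b).differentiable one_ne_zero
  have hpd2φd : ∀ a b : Fin n, Differentiable ℝ (pd2 a b φ) :=
    fun a b => (hpd2φ a b).differentiable two_ne_zero
  -- first derivative of Φ
  have hD1 : ∀ (a : Fin n) (x : Fin n → ℝ),
      pd a (fun y => (lap φ y + 2) * Real.exp (-μ * φ y)) x =
      (pd a (lap φ) x - μ * (lap φ x + 2) * pd a φ x) * Real.exp (-μ * φ x) := by
    intro a x
    rw [pd_mul ((hlapd x).add_const 2) (hExd x), pd_add_const,
      pd_exp ((hφd x).const_mul (-μ)), pd_const_mul (hφd x)]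
    ring
  -- critical point
  have hmaxloc : IsLocalMax (fun x => (lap φ x + 2) * Real.exp (-μ * φ x)) p₀ :=
    Filter.Eventually.of_forall hmax
  have hcrit : ∀ a : Fin n, pd a (fun x => (lap φ x + 2) * Real.exp (-μ * φ x)) p₀ = 0 := by
    intro a
    show fderiv ℝ _ p₀ (Pi.single a 1) = 0
    rw [hmaxloc.fderiv_eq_zero]
    rfl
  have hc : ∀ a : Fin n, pd a (lap φ) p₀ = μ * (lap φ p₀ + 2) * pd a φ p₀ := by
    intro a
    have h := hcrit a
    rw [hD1 a p₀] at h
    rcases mul_eq_zero.1 h with h' | h'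
    · linarith [sub_eq_zero.1 h']
    · exact absurd h' (Real.exp_ne_zero _)
  -- commuting fourth derivatives
  have hstep : ∀ (a b k : Fin n), pd a (pd b (pd2 k k φ)) = pd2 k k (pd2 a b φ) := by
    intro a b k
    have e1 : pd b (pd k φ) = pd k (pd b φ) := pd_comm hφ2 b k
    have e2 : pd b (pd2 k k φ) = pd k (pd k (pd b φ)) := by
      show pd b (pd k (pd k φ)) = _
      rw [pd_comm (hφ2pd k) b k, e1]
    rw [e2]
    have e3 : pd a (pd k (pd b φ)) = pd k (pd a (pd b φ)) := pd_comm (hφ2pd b) a k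
    have e4 : ContDiff ℝ 2 (pd k (pd b φ)) := pd_contDiff_s9 (hφ3pd b) (by norm_num) k
    show pd a (pd k (pd k (pd b φ))) = pd k (pd k (pd a (pd b φ)))
    rw [pd_comm e4 a k, e3]
  have hcomm : ∀ a b : Fin n, pd a (pd b (lap φ)) p₀ = lap (pd2 a b φ) p₀ := by
    intro a b
    have h1 : pd b (lap φ) = fun x => ∑ k, pd b (pd2 k k φ) x := by
      funext x
      have h : lap φ = fun y => ∑ k, pd2 k k φ y := rfl
      rw [h, pd_sum fun k _ => (hpd2φd k k x)]
    rw [h1, pd_sum fun k _ => ((pd_contDiff_s9 (m := 1) (hpd2φ k k) le_rfl b).differentiable one_ne_zero p₀)]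
    have h2 : lap (pd2 a b φ) p₀ = ∑ k, pd2 k k (pd2 a b φ) p₀ := rfl
    rw [h2]
    exact Finset.sum_congr rfl fun k _ => by rw [hstep a b k]
  -- second derivative of Φ at p₀
  have hQform : ∀ a b : Fin n,
      pd2 a b (fun x => (lap φ x + 2) * Real.exp (-μ * φ x)) p₀ =
      -(eta φ μ a b p₀) * Real.exp (-μ * φ p₀) := by
    intro a b
    have hfun : pd b (fun y => (lap φ y + 2) * Real.exp (-μ * φ y)) =
        fun x => (pd b (lap φ) x - μ * (lap φ x + 2) * pd b φ x) * Real.exp (-μ * φ x) :=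
      funext (hD1 b)
    have h0 : pd2 a b (fun x => (lap φ x + 2) * Real.exp (-μ * φ x)) p₀ =
        pd a (fun x => (pd b (lap φ) x - μ * (lap φ x + 2) * pd b φ x) * Real.exp (-μ * φ x)) p₀ := by
      show pd a (pd b (fun y => (lap φ y + 2) * Real.exp (-μ * φ y))) p₀ = _
      rw [hfun]
    rw [h0]
    have hDdiff : ∀ x, DifferentiableAt ℝ
        (fun y => pd b (lap φ) y - μ * (lap φ y + 2) * pd b φ y) x := by
      intro x
      exact ((hpdlapd b x).sub
        ((((hlapd x).add_const 2).const_mul μ).mul ((hφ3pd b).differentiable (by norm_num) x)))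
    rw [pd_mul (hDdiff p₀) (hExd p₀)]
    have hsub : pd a (fun y => pd b (lap φ) y - μ * (lap φ y + 2) * pd b φ y) p₀ =
        pd a (pd b (lap φ)) p₀ -
          (μ * pd a (lap φ) p₀ * pd b φ p₀ + μ * (lap φ p₀ + 2) * pd2 a b φ p₀) := by
      rw [pd_sub (hpdlapd b p₀)
        ((((hlapd p₀).add_const 2).const_mul μ).fun_mul ((hφ3pd b).differentiable (by norm_num) p₀)),
        pd_mul (((hlapd p₀).add_const 2).const_mul μ) ((hφ3pd b).differentiable (by norm_num) p₀)]
      have : pd a (fun y => μ * (lap φ y + 2)) p₀ = μ * pd a (lap φ) p₀ := by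
        rw [pd_const_mul ((hlapd p₀).add_const 2), pd_add_const]
      rw [this]
      show _ - (μ * pd a (lap φ) p₀ * pd b φ p₀ + μ * (lap φ p₀ + 2) * pd a (pd b φ) p₀) = _
      rfl
    have hzero : pd b (lap φ) p₀ - μ * (lap φ p₀ + 2) * pd b φ p₀ = 0 := by
      rw [hc b]; ring
    rw [hsub, hzero, hcomm a b, hc a]
    show _ = -(μ * (lap φ p₀ + 2) * (pd2 a b φ p₀ + μ * pd a φ p₀ * pd b φ p₀)
      - lap (pd2 a b φ) p₀) * Real.exp (-μ * φ p₀)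
    ring
  -- second-order condition
  have hQ : ∀ v : Fin n → ℝ,
      fderiv ℝ (fderiv ℝ (fun x => (lap φ x + 2) * Real.exp (-μ * φ x))) p₀ v v ≤ 0 := by
    intro v
    obtain ⟨hgC, hgd⟩ := line_stuff hΦ p₀ v
    rw [← hgd]
    refine second_deriv_nonpos_at_max hgC fun t => ?_
    simpa using hmax (p₀ + t • v)
  have hQsym : ∀ a b : Fin n,
      fderiv ℝ (fderiv ℝ (fun x => (lap φ x + 2) * Real.exp (-μ * φ x))) p₀
        (Pi.single a 1) (Pi.single b 1) =
      fderiv ℝ (fderiv ℝ (fun x => (lap φ x + 2) * Real.exp (-μ * φ x))) p₀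
        (Pi.single b 1) (Pi.single a 1) := by
    intro a b
    rw [← pd2_eq_fderiv2 hΦ, ← pd2_eq_fderiv2 hΦ]
    exact pd2_symm hΦ a b p₀
  -- eta in terms of the Hessian of Φ
  have heta : ∀ a b : Fin n, eta φ μ a b p₀ =
      -(fderiv ℝ (fderiv ℝ (fun x => (lap φ x + 2) * Real.exp (-μ * φ x))) p₀
        (Pi.single a 1) (Pi.single b 1)) * Real.exp (μ * φ p₀) := by
    intro a b
    have h := hQform a b
    rw [pd2_eq_fderiv2 hΦ] at h
    rw [h]
    have hme : Real.exp (-μ * φ p₀) * Real.exp (μ * φ p₀) = 1 := by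
      rw [← Real.exp_add]; ring_nf; exact Real.exp_zero
    linear_combination (-(eta φ μ a b p₀)) * hme
  intro i j
  have hii : 0 ≤ eta φ μ i i p₀ := by
    rw [heta i i]
    exact mul_nonneg (neg_nonneg.2 (hQ (Pi.single i 1))) (Real.exp_pos _).le
  have hjj : 0 ≤ eta φ μ j j p₀ := by
    rw [heta j j]
    exact mul_nonneg (neg_nonneg.2 (hQ (Pi.single j 1))) (Real.exp_pos _).le
  refine ⟨hii, ?_⟩
  -- the quadratic form is nonnegative
  have hquad : ∀ x : ℝ, 0 ≤ eta φ μ i i p₀ * (x * x) + (2 * eta φ μ i j p₀) * x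
      + eta φ μ j j p₀ := by
    intro t
    have hv := hQ (t • (Pi.single i 1 : Fin n → ℝ) + Pi.single j 1)
    have hexp : fderiv ℝ (fderiv ℝ (fun x => (lap φ x + 2) * Real.exp (-μ * φ x))) p₀
        (t • (Pi.single i 1 : Fin n → ℝ) + Pi.single j 1)
        (t • (Pi.single i 1 : Fin n → ℝ) + Pi.single j 1)
        = t * t * (fderiv ℝ (fderiv ℝ (fun x => (lap φ x + 2) * Real.exp (-μ * φ x))) p₀
            (Pi.single i 1) (Pi.single i 1))
          + t * (fderiv ℝ (fderiv ℝ (fun x => (lap φ x + 2) * Real.exp (-μ * φ x))) p₀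
            (Pi.single i 1) (Pi.single j 1))
          + t * (fderiv ℝ (fderiv ℝ (fun x => (lap φ x + 2) * Real.exp (-μ * φ x))) p₀
            (Pi.single j 1) (Pi.single i 1))
          + (fderiv ℝ (fderiv ℝ (fun x => (lap φ x + 2) * Real.exp (-μ * φ x))) p₀
            (Pi.single j 1) (Pi.single j 1)) := by
      simp only [map_add, _root_.map_smul, ContinuousLinearMap.add_apply,
        ContinuousLinearMap.coe_smul', Pi.smul_apply, smul_eq_mul]
      ring
    rw [hexp] at hv
    rw [← hQsym i j] at hv
    have hpos := mul_nonneg (Real.exp_pos (μ * φ p₀)).le (neg_nonneg.2 hv)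
    rw [heta i i, heta i j, heta j j]
    nlinarith [hpos]
  have hdisc := discrim_le_zero hquad
  rw [discrim] at hdisc
  have hsq : eta φ μ i j p₀ ^ 2 ≤ eta φ μ i i p₀ * eta φ μ j j p₀ := by nlinarith [hdisc]
  calc |eta φ μ i j p₀| = Real.sqrt (eta φ μ i j p₀ ^ 2) := (Real.sqrt_sq_eq_abs _).symm
  _ ≤ Real.sqrt (eta φ μ i i p₀ * eta φ μ j j p₀) := Real.sqrt_le_sqrt hsq
end

section
/- Let A, B, a₁, a₂, a₃, a₄, E be real numbers with B > 0 and AB − (a₁²+a₂²+a₃²+a₄²) = E > 0. Consider the symmetric 6×6 matrix Q with rows (B,0,0,0,−|a₃|,−|a₂|), (0,B,0,0,−|a₄|,−|a₁|), (0,0,B,0,−|a₁|,−|a₄|), (0,0,0,B,−|a₂|,−|a₃|), (−|a₃|,−|a₄|,−|a₁|,−|a₂|,A,0), (−|a₂|,−|a₁|,−|a₄|,−|a₃|,0,A). Then Q is positive definite if and only if 2(|a₂a₃| + |a₁a₄|) < E. -/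
set_option maxHeartbeats 1000000 in
/-- The `6×6` matrix of the quadratic form from Section 7 of the paper is positive
definite if and only if `2(|a₂a₃| + |a₁a₄|) < E`. -/
theorem Q6_posDef_iff
    (A B E a₁ a₂ a₃ a₄ : ℝ) (hB : 0 < B)
    (hE : A * B - (a₁ ^ 2 + a₂ ^ 2 + a₃ ^ 2 + a₄ ^ 2) = E) (hEpos : 0 < E)
    (Q : Matrix (Fin 6) (Fin 6) ℝ)
    (hQ : Q = !![B, 0, 0, 0, -|a₃|, -|a₂|;
                 0, B, 0, 0, -|a₄|, -|a₁|;
                 0, 0, B, 0, -|a₁|, -|a₄|;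
                 0, 0, 0, B, -|a₂|, -|a₃|;
                 -|a₃|, -|a₄|, -|a₁|, -|a₂|, A, 0;
                 -|a₂|, -|a₁|, -|a₄|, -|a₃|, 0, A]) :
    Q.PosDef ↔ 2 * (|a₂ * a₃| + |a₁ * a₄|) < E := by
  subst hQ
  rw [Matrix.posDef_iff_dotProduct_mulVec]
  have habs : |a₂ * a₃| + |a₁ * a₄| = |a₂| * |a₃| + |a₁| * |a₄| := by
    rw [abs_mul, abs_mul]
  have h1 : |a₁| ^ 2 = a₁ ^ 2 := sq_abs a₁
  have h2 : |a₂| ^ 2 = a₂ ^ 2 := sq_abs a₂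
  have h3 : |a₃| ^ 2 = a₃ ^ 2 := sq_abs a₃
  have h4 : |a₄| ^ 2 = a₄ ^ 2 := sq_abs a₄
  have key : ∀ x : Fin 6 → ℝ,
      B * dotProduct (star x) ((!![B, 0, 0, 0, -|a₃|, -|a₂|;
                 0, B, 0, 0, -|a₄|, -|a₁|;
                 0, 0, B, 0, -|a₁|, -|a₄|;
                 0, 0, 0, B, -|a₂|, -|a₃|;
                 -|a₃|, -|a₄|, -|a₁|, -|a₂|, A, 0;
                 -|a₂|, -|a₁|, -|a₄|, -|a₃|, 0, A] : Matrix (Fin 6) (Fin 6) ℝ).mulVec x)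
      = (B * x 0 - |a₃| * x 4 - |a₂| * x 5)^2 + (B * x 1 - |a₄| * x 4 - |a₁| * x 5)^2
        + (B * x 2 - |a₁| * x 4 - |a₄| * x 5)^2 + (B * x 3 - |a₂| * x 4 - |a₃| * x 5)^2
        + 2*(|a₂| * |a₃| + |a₁| * |a₄|) * (x 4 - x 5)^2
        + (E - 2*(|a₂| * |a₃| + |a₁| * |a₄|)) * (x 4^2 + x 5^2) := by
    intro x
    simp only [dotProduct, Matrix.mulVec, Fin.sum_univ_six, star_trivial]
    simp [Matrix.cons_val_succ, show (5:Fin 6) = (4:Fin 5).succ from rfl,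
      show (4:Fin 6) = (3:Fin 5).succ from rfl]
    linear_combination (x 4^2 + x 5^2) * hE - (x 4^2 + x 5^2) * (h1 + h2 + h3 + h4)
  constructor
  · rintro ⟨-, hpos⟩
    set v : Fin 6 → ℝ := ![|a₃| + |a₂|, |a₄| + |a₁|, |a₁| + |a₄|, |a₂| + |a₃|, B, B] with hv
    have hvne : v ≠ 0 := by
      intro h
      have := congrFun h 4
      simp [hv] at this
      exact absurd this (ne_of_gt hB)
    have hq := hpos hvne
    have hk := key v
    have hv0 : v 0 = |a₃| + |a₂| := rfl
    have hv1 : v 1 = |a₄| + |a₁| := rfl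
    have hv2 : v 2 = |a₁| + |a₄| := rfl
    have hv3 : v 3 = |a₂| + |a₃| := rfl
    have hv4 : v 4 = B := rfl
    have hv5 : v 5 = B := rfl
    rw [hv0, hv1, hv2, hv3, hv4, hv5] at hk
    rw [habs]
    nlinarith [mul_pos hB hq, hk, mul_pos hB hB]
  · intro ht
    rw [habs] at ht
    refine ⟨?_, ?_⟩
    · unfold Matrix.IsHermitian
      ext i j
      fin_cases i <;> fin_cases j <;>
        simp [Matrix.conjTranspose_apply, Matrix.cons_val_succ,
          show (5:Fin 6) = (4:Fin 5).succ from rfl, show (4:Fin 6) = (3:Fin 5).succ from rfl]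
    · intro x hx
      have hk := key x
      have hb1 : (0:ℝ) ≤ |a₁| := abs_nonneg a₁
      have hb2 : (0:ℝ) ≤ |a₂| := abs_nonneg a₂
      have hb3 : (0:ℝ) ≤ |a₃| := abs_nonneg a₃
      have hb4 : (0:ℝ) ≤ |a₄| := abs_nonneg a₄
      have hpos : 0 < B * dotProduct (star x) ((!![B, 0, 0, 0, -|a₃|, -|a₂|;
                 0, B, 0, 0, -|a₄|, -|a₁|;
                 0, 0, B, 0, -|a₁|, -|a₄|;
                 0, 0, 0, B, -|a₂|, -|a₃|;
                 -|a₃|, -|a₄|, -|a₁|, -|a₂|, A, 0;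
                 -|a₂|, -|a₁|, -|a₄|, -|a₃|, 0, A] : Matrix (Fin 6) (Fin 6) ℝ).mulVec x) := by
        rw [hk]
        clear hk key hE
        by_cases h45 : x 4 = 0 ∧ x 5 = 0
        · obtain ⟨h4', h5'⟩ := h45
          have hne : x 0 ≠ 0 ∨ x 1 ≠ 0 ∨ x 2 ≠ 0 ∨ x 3 ≠ 0 := by
            by_contra hcon
            push_neg at hcon
            obtain ⟨e0, e1, e2, e3⟩ := hcon
            exact hx (funext fun i => by fin_cases i <;> simp [e0, e1, e2, e3, h4', h5'])
          rw [h4', h5']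
          norm_num
          rcases hne with h | h | h | h <;>
            nlinarith [mul_pos hB hB, sq_nonneg (x 0), sq_nonneg (x 1), sq_nonneg (x 2),
              sq_nonneg (x 3), sq_pos_of_ne_zero h]
        · have h45' : 0 < x 4 ^ 2 + x 5 ^ 2 := by
            rcases not_and_or.mp h45 with h | h <;>
              nlinarith [sq_nonneg (x 4), sq_nonneg (x 5), sq_pos_of_ne_zero h]
          have s0 := sq_nonneg (B * x 0 - |a₃| * x 4 - |a₂| * x 5)
          have s1 := sq_nonneg (B * x 1 - |a₄| * x 4 - |a₁| * x 5)
          have s2 := sq_nonneg (B * x 2 - |a₁| * x 4 - |a₄| * x 5)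
          have s3 := sq_nonneg (B * x 3 - |a₂| * x 4 - |a₃| * x 5)
          have t0 : (0:ℝ) ≤ 2 * (|a₂| * |a₃| + |a₁| * |a₄|) * (x 4 - x 5) ^ 2 :=
            mul_nonneg (by positivity) (sq_nonneg _)
          have t1 : (0:ℝ) < (E - 2 * (|a₂| * |a₃| + |a₁| * |a₄|)) * (x 4 ^ 2 + x 5 ^ 2) :=
            mul_pos (by linarith) h45'
          linarith
      have := mul_pos (inv_pos.mpr hB) hpos
      rwa [← mul_assoc, inv_mul_cancel₀ hB.ne', one_mul] at this
end

section
/- Let F ∈ C⁰(T⁶) and let φ ∈ C²(T⁶) be a solution of equation (†). Then at every point of ℝ⁶ and for every nonzero ξ = (ξ₁,…,ξ₆) ∈ ℝ⁶ one has B(ξ₁²+ξ₂²+ξ₃²+ξ₄²) + A(ξ₅²+ξ₆²) − 2a₁(ξ₃ξ₅ − ξ₂ξ₆) − 2a₂(ξ₄ξ₅ − ξ₁ξ₆) − 2a₃(ξ₄ξ₆ + ξ₁ξ₅) − 2a₄(ξ₃ξ₆ + ξ₂ξ₅) > 0; in particular equation (†) is elliptic at any solution. -/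
open MeasureTheory

/-- `A = φ₁₁ + φ₂₂ + φ₃₃ + φ₄₄ + 1` on `T⁶`. -/
noncomputable def A6 (φ : (Fin 6 → ℝ) → ℝ) : (Fin 6 → ℝ) → ℝ :=
  fun x => pd2 0 0 φ x + pd2 1 1 φ x + pd2 2 2 φ x + pd2 3 3 φ x + 1

/-- `B = φ₅₅ + φ₆₆ + 1` on `T⁶`. -/
noncomputable def B6 (φ : (Fin 6 → ℝ) → ℝ) : (Fin 6 → ℝ) → ℝ :=
  fun x => pd2 4 4 φ x + pd2 5 5 φ x + 1

/-- `a₁ = φ₃₅ − φ₂₆`. -/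
noncomputable def a₁6 (φ : (Fin 6 → ℝ) → ℝ) : (Fin 6 → ℝ) → ℝ :=
  fun x => pd2 2 4 φ x - pd2 1 5 φ x

/-- `a₂ = φ₄₅ − φ₁₆`. -/
noncomputable def a₂6 (φ : (Fin 6 → ℝ) → ℝ) : (Fin 6 → ℝ) → ℝ :=
  fun x => pd2 3 4 φ x - pd2 0 5 φ x

/-- `a₃ = φ₄₆ + φ₁₅`. -/
noncomputable def a₃6 (φ : (Fin 6 → ℝ) → ℝ) : (Fin 6 → ℝ) → ℝ :=
  fun x => pd2 3 5 φ x + pd2 0 4 φ x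

/-- `a₄ = φ₃₆ + φ₂₅`. -/
noncomputable def a₄6 (φ : (Fin 6 → ℝ) → ℝ) : (Fin 6 → ℝ) → ℝ :=
  fun x => pd2 2 5 φ x + pd2 1 4 φ x

/-- Equation (†): the reduction of the quaternionic Monge–Ampère equation on `M₂` to the
base `T⁶` for `T²`-invariant data. -/
def EqDagger (F φ : (Fin 6 → ℝ) → ℝ) : Prop :=
  ∀ x : Fin 6 → ℝ,
    A6 φ x * B6 φ x - (a₁6 φ x) ^ 2 - (a₂6 φ x) ^ 2 - (a₃6 φ x) ^ 2 - (a₄6 φ x) ^ 2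
      = Real.exp (F x)

theorem second_deriv_nonneg (u : ℝ → ℝ) (hu : Differentiable ℝ u) {d : ℝ}
    (hd : HasDerivAt (deriv u) d 0) (hmin : ∀ t, u 0 ≤ u t) : 0 ≤ d := by
  by_contra hneg
  push_neg at hneg
  have hg0 : deriv u 0 = 0 :=
    IsLocalMin.deriv_eq_zero (Filter.Eventually.of_forall hmin)
  have hslope : Filter.Tendsto (slope (deriv u) 0) (nhdsWithin 0 {(0:ℝ)}ᶜ) (nhds d) :=
    hasDerivAt_iff_tendsto_slope.mp hd
  have h1 : ∀ᶠ t in nhdsWithin 0 (Set.Ioi 0), slope (deriv u) 0 t < 0 := by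
    have : ∀ᶠ t in nhdsWithin 0 {(0:ℝ)}ᶜ, slope (deriv u) 0 t < 0 :=
      hslope (Iio_mem_nhds hneg)
    exact this.filter_mono (nhdsWithin_mono _ (by intro t ht; exact ne_of_gt ht))
  rw [eventually_nhdsWithin_iff] at h1
  obtain ⟨ε, hε, hball⟩ := Metric.eventually_nhds_iff_ball.mp h1
  have hgneg : ∀ t ∈ Set.Ioo (0:ℝ) ε, deriv u t < 0 := by
    intro t ht
    have hs := hball t (by simp [Real.ball_eq_Ioo]; constructor <;> [linarith [ht.1, ht.2]; linarith [ht.2]]) ht.1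
    rw [slope_def_field] at hs
    have : deriv u t / t < 0 := by simpa [hg0] using hs
    have ht0 : 0 < t := ht.1
    rcases div_neg_iff.mp this with ⟨_, h⟩ | ⟨h, _⟩ <;> linarith
  obtain ⟨c, hc, hceq⟩ := exists_deriv_eq_slope u (by linarith : (0:ℝ) < ε/2)
    hu.continuous.continuousOn (hu.differentiableOn)
  have h2 : deriv u c < 0 := hgneg c ⟨hc.1, by linarith [hc.2]⟩
  rw [hceq] at h2
  have := hmin (ε/2)
  have : 0 ≤ (u (ε/2) - u 0) / (ε/2 - 0) := div_nonneg (by linarith) (by linarith)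
  linarith

lemma periodic_zvec {n : ℕ} {f : (Fin n → ℝ) → ℝ} (hf : PeriodicPi f)
    (m : Fin n → ℤ) (x : Fin n → ℝ) : f (x + fun i => (m i : ℝ)) = f x := by
  have hper : ∀ i : Fin n, Function.Periodic f (Pi.single i 1) := fun i y => hf y i
  have key : ∀ s : Finset (Fin n), f (x + ∑ i ∈ s, (m i) • Pi.single i (1:ℝ)) = f x := by
    intro s
    induction s using Finset.induction_on with
    | empty => simp
    | @insert a s ha ih =>
      rw [Finset.sum_insert ha]
      have : x + ((m a) • Pi.single a (1:ℝ) + ∑ i ∈ s, (m i) • Pi.single i (1:ℝ))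
          = (x + ∑ i ∈ s, (m i) • Pi.single i (1:ℝ)) + (m a) • Pi.single a (1:ℝ) := by
        abel
      rw [this, (hper a).zsmul (m a) _, ih]
  have hsum : (fun i => (m i : ℝ)) = ∑ i, (m i) • Pi.single i (1:ℝ) := by
    have := Finset.univ_sum_single (fun i => (m i : ℝ))
    rw [← this]
    apply Finset.sum_congr rfl
    intro i _
    ext j
    by_cases h : j = i
    · subst h; simp
    · simp [Pi.single_apply, h, Ne.symm]
  rw [hsum]
  exact key Finset.univ

lemma exists_global_min {n : ℕ} {f : (Fin n → ℝ) → ℝ} (hc : Continuous f)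
    (hf : PeriodicPi f) : ∃ x₀ : Fin n → ℝ, ∀ y, f x₀ ≤ f y := by
  have hK : IsCompact (Set.Icc (0 : Fin n → ℝ) 1) := isCompact_Icc
  obtain ⟨x₀, -, hmin⟩ := hK.exists_isMinOn ⟨0, Set.mem_Icc.mpr ⟨le_rfl, zero_le_one⟩⟩
    hc.continuousOn
  refine ⟨x₀, fun y => ?_⟩
  set z : Fin n → ℝ := fun i => Int.fract (y i) with hz
  have hzy : f y = f z := by
    have := periodic_zvec hf (fun i => ⌊y i⌋) z
    rw [← this]
    congr 1
    funext i
    show y i = z i + (⌊y i⌋ : ℝ)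
    rw [hz]
    exact (Int.fract_add_floor (y i)).symm
  rw [hzy]
  exact hmin ⟨fun i => Int.fract_nonneg _, fun i => (Int.fract_lt_one _).le⟩

lemma contDiff_pd {n : ℕ} (i : Fin n) {φ : (Fin n → ℝ) → ℝ} (hφ : ContDiff ℝ 2 φ) :
    ContDiff ℝ 1 (pd i φ) := by
  have h := hφ.fderiv_right (m := 1) (by norm_num)
  exact (ContinuousLinearMap.apply ℝ ℝ (Pi.single i 1)).contDiff.comp h

lemma continuous_pd2 {n : ℕ} (i j : Fin n) {φ : (Fin n → ℝ) → ℝ} (hφ : ContDiff ℝ 2 φ) :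
    Continuous (pd2 i j φ) := by
  have h : Continuous (fderiv ℝ (pd j φ)) := (contDiff_pd j hφ).continuous_fderiv one_ne_zero
  exact (ContinuousLinearMap.apply ℝ ℝ (Pi.single i 1)).continuous.comp h

lemma pd2_nonneg_at_min {n : ℕ} {φ : (Fin n → ℝ) → ℝ} (hφ : ContDiff ℝ 2 φ)
    {x₀ : Fin n → ℝ} (hmin : ∀ y, φ x₀ ≤ φ y) (i : Fin n)
    (sdt : ∀ (u : ℝ → ℝ), Differentiable ℝ u → ∀ {d : ℝ},
      HasDerivAt (deriv u) d 0 → (∀ t, u 0 ≤ u t) → 0 ≤ d) :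
    0 ≤ pd2 i i φ x₀ := by
  set v : Fin n → ℝ := Pi.single i (1:ℝ) with hv
  set L : ℝ → (Fin n → ℝ) := fun t => x₀ + t • v with hLdef
  have hL : ∀ t : ℝ, HasDerivAt L v t := by
    intro t
    have := ((hasDerivAt_id t).smul_const v).const_add x₀
    simpa [hLdef] using this
  have hL0 : L 0 = x₀ := by simp [hLdef]
  set u : ℝ → ℝ := fun t => φ (L t) with hu
  have hud : ∀ t : ℝ, HasDerivAt u (pd i φ (L t)) t := by
    intro t
    exact ((hφ.differentiable (by norm_num) (L t)).hasFDerivAt).comp_hasDerivAt t (hL t)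
  have hderiv : deriv u = fun t => pd i φ (L t) := funext fun t => (hud t).deriv
  have hg : HasDerivAt (fun t => pd i φ (L t)) (pd2 i i φ x₀) 0 := by
    have hd := ((contDiff_pd i hφ).differentiable one_ne_zero (L 0)).hasFDerivAt
    have := hd.comp_hasDerivAt 0 (hL 0)
    rw [hL0] at this
    exact this
  exact sdt u (fun t => (hud t).differentiableAt) (hderiv ▸ hg)
    (fun t => by simpa [hu, hL0] using hmin (L t))

lemma quad_pos (A B a1 a2 a3 a4 E u0 u1 u2 u3 w0 w1 : ℝ) (hB : 0 < B) (hE : 0 < E)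
    (heq : A * B - a1 ^ 2 - a2 ^ 2 - a3 ^ 2 - a4 ^ 2 = E)
    (hne : 0 < u0 ^ 2 + u1 ^ 2 + u2 ^ 2 + u3 ^ 2 + (w0 ^ 2 + w1 ^ 2)) :
    0 < B * (u0 ^ 2 + u1 ^ 2 + u2 ^ 2 + u3 ^ 2) + A * (w0 ^ 2 + w1 ^ 2)
        - 2 * a1 * (u2 * w0 - u1 * w1) - 2 * a2 * (u3 * w0 - u0 * w1)
        - 2 * a3 * (u3 * w1 + u0 * w0) - 2 * a4 * (u2 * w1 + u1 * w0) := by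
  rcases eq_or_lt_of_le (by positivity : (0:ℝ) ≤ w0 ^ 2 + w1 ^ 2) with hq | hq
  · have h4 : w0 = 0 := by nlinarith [sq_nonneg w0, sq_nonneg w1]
    have h5 : w1 = 0 := by nlinarith [sq_nonneg w0, sq_nonneg w1]
    subst h4 h5
    have hp : 0 < u0 ^ 2 + u1 ^ 2 + u2 ^ 2 + u3 ^ 2 := by nlinarith
    nlinarith [mul_pos hB hp]
  · set Q := B * (u0 ^ 2 + u1 ^ 2 + u2 ^ 2 + u3 ^ 2) + A * (w0 ^ 2 + w1 ^ 2)
        - 2 * a1 * (u2 * w0 - u1 * w1) - 2 * a2 * (u3 * w0 - u0 * w1)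
        - 2 * a3 * (u3 * w1 + u0 * w0) - 2 * a4 * (u2 * w1 + u1 * w0) with hQdef
    have key : B * Q = (B * u0 - (-a2 * w1 + a3 * w0)) ^ 2
        + (B * u1 - (-a1 * w1 + a4 * w0)) ^ 2
        + (B * u2 - (a1 * w0 + a4 * w1)) ^ 2
        + (B * u3 - (a2 * w0 + a3 * w1)) ^ 2
        + E * (w0 ^ 2 + w1 ^ 2) := by
      rw [hQdef]
      linear_combination (w0 ^ 2 + w1 ^ 2) * heq
    by_contra hQ
    push_neg at hQ
    have h1 : B * Q ≤ 0 := mul_nonpos_of_nonneg_of_nonpos hB.le hQ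
    nlinarith [mul_pos hE hq, sq_nonneg (B * u0 - (-a2 * w1 + a3 * w0)),
      sq_nonneg (B * u1 - (-a1 * w1 + a4 * w0)), sq_nonneg (B * u2 - (a1 * w0 + a4 * w1)),
      sq_nonneg (B * u3 - (a2 * w0 + a3 * w1))]

/-- Ellipticity of equation (†) at any solution. -/
theorem ellipticity_of_eqDagger
    (F φ : (Fin 6 → ℝ) → ℝ) (hF : Continuous F) (hFper : PeriodicPi F)
    (hφ : ContDiff ℝ 2 φ) (hφper : PeriodicPi φ) (heq : EqDagger F φ) :
    ∀ x : Fin 6 → ℝ, ∀ ξ : Fin 6 → ℝ, ξ ≠ 0 →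
      0 < B6 φ x * ((ξ 0) ^ 2 + (ξ 1) ^ 2 + (ξ 2) ^ 2 + (ξ 3) ^ 2)
          + A6 φ x * ((ξ 4) ^ 2 + (ξ 5) ^ 2)
          - 2 * a₁6 φ x * (ξ 2 * ξ 4 - ξ 1 * ξ 5)
          - 2 * a₂6 φ x * (ξ 3 * ξ 4 - ξ 0 * ξ 5)
          - 2 * a₃6 φ x * (ξ 3 * ξ 5 + ξ 0 * ξ 4)
          - 2 * a₄6 φ x * (ξ 2 * ξ 5 + ξ 1 * ξ 4) := by
  -- B6 is continuous
  have hBcont : Continuous (B6 φ) := by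
    unfold B6
    exact ((continuous_pd2 4 4 hφ).add (continuous_pd2 5 5 hφ)).add continuous_const
  -- B6 never vanishes
  have hBne : ∀ x, B6 φ x ≠ 0 := by
    intro x hx
    have h := heq x
    rw [hx, mul_zero] at h
    nlinarith [Real.exp_pos (F x), sq_nonneg (a₁6 φ x), sq_nonneg (a₂6 φ x),
      sq_nonneg (a₃6 φ x), sq_nonneg (a₄6 φ x)]
  -- B6 is positive at a global minimum of φ
  obtain ⟨x₀, hmin⟩ := exists_global_min (hφ.continuous) hφper
  have hB0 : 0 < B6 φ x₀ := by
    have h4 := pd2_nonneg_at_min hφ hmin 4 (fun u hu {d} hd hm => second_deriv_nonneg u hu hd hm)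
    have h5 := pd2_nonneg_at_min hφ hmin 5 (fun u hu {d} hd hm => second_deriv_nonneg u hu hd hm)
    unfold B6
    linarith
  -- B6 is positive everywhere, by connectedness
  have hBpos : ∀ x, 0 < B6 φ x := by
    intro x
    rcases lt_or_gt_of_ne (hBne x) with h | h
    · exfalso
      have hsub := intermediate_value_univ x x₀ hBcont
      have : (0:ℝ) ∈ Set.Icc (B6 φ x) (B6 φ x₀) := ⟨h.le, hB0.le⟩
      obtain ⟨y, hy⟩ := hsub this
      exact hBne y hy
    · exact h
  intro x ξ hξ
  -- some coordinate of ξ is nonzero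
  have hpq : 0 < (ξ 0)^2 + (ξ 1)^2 + (ξ 2)^2 + (ξ 3)^2 + ((ξ 4)^2 + (ξ 5)^2) := by
    obtain ⟨i, hi⟩ := Function.ne_iff.mp hξ
    have hi0 : ξ i ≠ 0 := by simpa using hi
    have hi' : (0:ℝ) < ξ i ^ 2 := (sq_nonneg _).lt_of_ne (Ne.symm (pow_ne_zero 2 hi0))
    have hle : ξ i ^ 2 ≤ ∑ j, ξ j ^ 2 :=
      Finset.single_le_sum (f := fun j => ξ j ^ 2) (fun j _ => sq_nonneg _) (Finset.mem_univ i)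
    rw [Fin.sum_univ_six] at hle
    linarith
  exact quad_pos (A6 φ x) (B6 φ x) (a₁6 φ x) (a₂6 φ x) (a₃6 φ x) (a₄6 φ x)
    (Real.exp (F x)) (ξ 0) (ξ 1) (ξ 2) (ξ 3) (ξ 4) (ξ 5)
    (hBpos x) (Real.exp_pos (F x)) (heq x) hpq
end
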